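/- Let H be a separable infinite-dimensional complex Hilbert space and let 𝒯 ⊆ B₁ be a family of operators of norm at most 1. Suppose there exists an orthonormal basis {e_n}_{n=1}^∞ of H such that for every n ∈ ℕ and every c > 0, the set {x ∈ F_n^⊥ : ∃ T ∈ 𝒯 with ‖P_{F_n} T x‖ ≥ c‖x‖} is contained in some finite-dimensional subspace of H, where F_n = span{e₁,…,e_n} and P_{F_n} is the orthogonal projection onto F_n. Then 𝒯, viewed as a family of maps H₁ → H₁, is UEC for the weak uniformity. -/

import Mathlib

open scoped InnerProductSpace

/-- A family of maps `F k : H → H` (viewed as maps of the closed unit ball `H₁` to itself)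
is *uniformly equicontinuous (UEC) for the weak uniformity* if for every `ε > 0` and all
vectors `x₁, …, x_N ∈ H₁` there exist `δ > 0` and vectors `w₁, …, w_M ∈ H₁` such that for
all `ξ, η ∈ H₁` with `|⟪ξ - η, w_j⟫| < δ` for all `j`, and every member of the family,
`|⟪F k ξ - F k η, x_i⟫| < ε` for all `i`. -/
def UECweak {H : Type*} [NormedAddCommGroup H] [InnerProductSpace ℂ H]
    {ι : Type*} (F : ι → H → H) : Prop :=
  ∀ ε : ℝ, 0 < ε → ∀ (N : ℕ) (x : Fin N → H), (∀ i, ‖x i‖ ≤ 1) →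
    ∃ (δ : ℝ) (M : ℕ) (w : Fin M → H), 0 < δ ∧ (∀ j, ‖w j‖ ≤ 1) ∧
      ∀ ξ η : H, ‖ξ‖ ≤ 1 → ‖η‖ ≤ 1 →
        (∀ j, ‖⟪ξ - η, w j⟫_ℂ‖ < δ) →
        ∀ (k : ι) (i : Fin N), ‖⟪F k ξ - F k η, x i⟫_ℂ‖ < ε

/-- The span of finitely many vectors `e 0, …, e (n-1)` is finite dimensional. -/
instance finiteDimensional_span_Iio {H : Type*} [NormedAddCommGroup H]
    [InnerProductSpace ℂ H] (e : ℕ → H) (n : ℕ) :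
    FiniteDimensional ℂ (Submodule.span ℂ (e '' Set.Iio n)) :=
  FiniteDimensional.span_of_finite ℂ ((Set.finite_Iio n).image e)

/-- Let `H` be a separable infinite-dimensional complex Hilbert space and let `𝒯 ⊆ B₁` be
a family of operators of norm at most `1`.  Suppose there is an orthonormal basis
`{e_n}` of `H` such that for every `n` and every `c > 0`, the set
`{x ∈ F_nᗮ : ∃ T ∈ 𝒯, ‖P_{F_n} T x‖ ≥ c ‖x‖}` is contained in some finite-dimensional
subspace, where `F_n` is the span of the first `n` basis vectors.  Then `𝒯`, viewed as a
family of maps `H₁ → H₁`, is UEC for the weak uniformity. -/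
theorem uecWeak_of_proj_condition_basis {H : Type*} [NormedAddCommGroup H]
    [InnerProductSpace ℂ H] [CompleteSpace H] [TopologicalSpace.SeparableSpace H]
    (hinf : ¬ FiniteDimensional ℂ H)
    (𝒯 : Set (H →L[ℂ] H)) (h𝒯 : ∀ T ∈ 𝒯, ‖T‖ ≤ 1)
    (e : HilbertBasis ℕ ℂ H)
    (hcond : ∀ (n : ℕ) (c : ℝ), 0 < c →
      ∃ W : Submodule ℂ H, FiniteDimensional ℂ W ∧
        ∀ x ∈ (Submodule.span ℂ (⇑e '' Set.Iio n))ᗮ,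
          (∃ T ∈ 𝒯, c * ‖x‖ ≤
            ‖(Submodule.orthogonalProjectionOnto (Submodule.span ℂ (⇑e '' Set.Iio n))
                ((T : H →L[ℂ] H) x) : Submodule.span ℂ (⇑e '' Set.Iio n))‖) →
          x ∈ W) :
    UECweak (fun T : 𝒯 => fun ξ : H => (T : H →L[ℂ] H) ξ) := by
  classical
  intro ε hε N x hx
  have hε8 : 0 < ε / 8 := by positivity
  -- Step 1: choose `n` with all `x i` within `ε/8` of `F_n`.
  have key : ∀ i : Fin N, ∃ ni : ℕ, ∀ n, ni ≤ n →
      ‖x i - (Submodule.orthogonalProjectionOnto (Submodule.span ℂ (⇑e '' Set.Iio n)) (x i) : H)‖ < ε / 8 := by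
    intro i
    have hs := (e.hasSum_repr (x i)).tendsto_sum_nat
    rw [Metric.tendsto_atTop] at hs
    obtain ⟨ni, hni⟩ := hs (ε / 8) hε8
    refine ⟨ni, fun n hn => ?_⟩
    have hmem : (∑ k ∈ Finset.range ni, e.repr (x i) k • e k) ∈
        Submodule.span ℂ (⇑e '' Set.Iio n) := by
      refine Submodule.sum_mem _ fun k hk =>
        Submodule.smul_mem _ _ (Submodule.subset_span ⟨k, ?_, rfl⟩)
      exact lt_of_lt_of_le (Finset.mem_range.mp hk) hn
    calc ‖x i - (Submodule.orthogonalProjectionOnto (Submodule.span ℂ (⇑e '' Set.Iio n)) (x i) : H)‖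
        ≤ ‖x i - ∑ k ∈ Finset.range ni, e.repr (x i) k • e k‖ := by
          rw [Submodule.coe_orthogonalProjectionOnto_apply, Submodule.starProjection_minimal]
          exact ciInf_le ⟨0, Set.forall_mem_range.2 fun _ => norm_nonneg _⟩
            (⟨_, hmem⟩ : Submodule.span ℂ (⇑e '' Set.Iio n))
      _ < ε / 8 := by
          rw [norm_sub_rev, ← dist_eq_norm]
          exact hni ni le_rfl
  choose ni hni using key
  set n := Finset.univ.sup ni with hndef
  set F := Submodule.span ℂ (⇑e '' Set.Iio n) with hFdef
  have hxn : ∀ i, ‖x i - (Submodule.orthogonalProjectionOnto F (x i) : H)‖ < ε / 8 := fun i =>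
    hni i n (Finset.le_sup (Finset.mem_univ i))
  obtain ⟨W, hWfd, hW⟩ := hcond n (ε / 8) hε8
  haveI := hWfd
  set V := W ⊔ F with hVdef
  haveI : FiniteDimensional ℂ V := Submodule.finiteDimensional_sup W F
  set m := Module.finrank ℂ V with hmdef
  set b := stdOrthonormalBasis ℂ V with hbdef
  set δ := ε / (8 * (m + 1)) with hδdef
  have hδpos : 0 < δ := by positivity
  refine ⟨δ, m, fun j => (b j : H), hδpos, fun j => le_of_eq (b.orthonormal.1 j), ?_⟩
  intro ξ η hξ hη hwk T i
  set ζ := ξ - η with hζdef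
  have hζ2 : ‖ζ‖ ≤ 2 := by
    calc ‖ζ‖ ≤ ‖ξ‖ + ‖η‖ := norm_sub_le _ _
      _ ≤ 2 := by linarith
  set y : V := Submodule.orthogonalProjectionOnto V ζ with hydef
  set bb : H := ζ - y with hbbdef
  -- the projection of ζ to V is small
  have hy_small : ‖(y : H)‖ ≤ ε / 8 := by
    have h1 : ∀ k, b.repr y k = ⟪(b k : H), ζ⟫_ℂ := by
      intro k
      rw [b.repr_apply_apply]
      have h0 : ⟪(b k : H), ζ - (y : H)⟫_ℂ = 0 := by
        rw [inner_eq_zero_symm]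
        exact Submodule.starProjection_inner_eq_zero ζ _ (b k).2
      have h0' : ⟪(b k : H), ζ⟫_ℂ - ⟪(b k : H), (y : H)⟫_ℂ = 0 := by
        rw [← inner_sub_right]; exact h0
      rw [Submodule.coe_inner, sub_eq_zero.mp h0']
    have h2 : ‖(y : H)‖ ≤ ∑ k : Fin m, ‖b.repr y k‖ := by
      calc ‖(y : H)‖ = ‖y‖ := rfl
        _ = ‖∑ k : Fin m, b.repr y k • b k‖ := by rw [b.sum_repr y]
        _ ≤ ∑ k : Fin m, ‖b.repr y k • b k‖ := norm_sum_le _ _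
        _ = ∑ k : Fin m, ‖b.repr y k‖ := by
            refine Finset.sum_congr rfl fun k _ => ?_
            rw [norm_smul, b.orthonormal.1 k, mul_one]
    have h3 : ∀ k : Fin m, ‖b.repr y k‖ ≤ δ := by
      intro k
      rw [h1 k, ← norm_inner_symm]
      exact le_of_lt (hwk k)
    have hmδ : (m : ℝ) * δ ≤ ε / 8 := by
      have h4 : (m : ℝ) / (8 * (m + 1)) ≤ 1 / 8 := by
        rw [div_le_div_iff₀ (by positivity) (by norm_num)]
        nlinarith [Nat.cast_nonneg (α := ℝ) m]
      calc (m : ℝ) * δ = ε * ((m : ℝ) / (8 * (m + 1))) := by rw [hδdef]; ring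
        _ ≤ ε * (1 / 8) := mul_le_mul_of_nonneg_left h4 hε.le
        _ = ε / 8 := by ring
    calc ‖(y : H)‖ ≤ ∑ k : Fin m, ‖b.repr y k‖ := h2
      _ ≤ ∑ _k : Fin m, δ := Finset.sum_le_sum fun k _ => h3 k
      _ = m * δ := by simp [mul_comm]
      _ ≤ ε / 8 := hmδ
  have hbb2 : ‖bb‖ ≤ 2 := by
    calc ‖bb‖ ≤ ‖ζ - ((0 : V) : H)‖ := by
          rw [hbbdef, hydef, Submodule.coe_orthogonalProjectionOnto_apply, Submodule.starProjection_minimal]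
          exact ciInf_le ⟨0, Set.forall_mem_range.2 fun _ => norm_nonneg _⟩ (0 : V)
      _ = ‖ζ‖ := by rw [ZeroMemClass.coe_zero, sub_zero]
      _ ≤ 2 := hζ2
  have hbbV : bb ∈ Vᗮ := Submodule.sub_starProjection_mem_orthogonal ζ
  have hbbF : bb ∈ Fᗮ := Submodule.orthogonal_le le_sup_right hbbV
  have hbbW : bb ∈ Wᗮ := Submodule.orthogonal_le le_sup_left hbbV
  set T' := (T : H →L[ℂ] H) with hT'def
  have hT'1 : ‖T'‖ ≤ 1 := h𝒯 T' T.2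
  -- the projection of `T' bb` to `F` is small
  have hPTb : ‖(Submodule.orthogonalProjectionOnto F (T' bb) : F)‖ ≤ ε / 8 * ‖bb‖ := by
    by_cases h : ε / 8 * ‖bb‖ ≤ ‖(Submodule.orthogonalProjectionOnto F (T' bb) : F)‖
    · have hbW : bb ∈ W := hW bb hbbF ⟨T', T.2, h⟩
      have hbb0 : bb = 0 := inner_self_eq_zero.mp ((Submodule.mem_orthogonal W bb).mp hbbW bb hbW)
      rw [hbb0]
      simp
    · exact le_of_lt (not_le.mp h)
  -- assemble the estimate
  have hsplit : ζ = (y : H) + bb := by rw [hbbdef]; abel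
  have hdecomp : ⟪T' ξ - T' η, x i⟫_ℂ = ⟪T' (y : H), x i⟫_ℂ
      + (⟪T' bb, x i - (Submodule.orthogonalProjectionOnto F (x i) : H)⟫_ℂ
        + ⟪((Submodule.orthogonalProjectionOnto F (T' bb)) : H), x i⟫_ℂ) := by
    rw [← map_sub, ← hζdef, hsplit, map_add, inner_add_left, inner_sub_right]
    simp only [Submodule.coe_orthogonalProjectionOnto_apply]
    rw [Submodule.inner_starProjection_left_eq_right]
    ring
  have t1 : ‖⟪T' (y : H), x i⟫_ℂ‖ ≤ ε / 8 := by
    calc ‖⟪T' (y : H), x i⟫_ℂ‖ ≤ ‖T' (y : H)‖ * ‖x i‖ := norm_inner_le_norm _ _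
      _ ≤ ε / 8 * 1 := by
          refine mul_le_mul ?_ (hx i) (norm_nonneg _) hε8.le
          calc ‖T' (y : H)‖ ≤ ‖T'‖ * ‖(y : H)‖ := T'.le_opNorm _
            _ ≤ 1 * (ε / 8) := mul_le_mul hT'1 hy_small (norm_nonneg _) zero_le_one
            _ = ε / 8 := one_mul _
      _ = ε / 8 := mul_one _
  have t2 : ‖⟪T' bb, x i - (Submodule.orthogonalProjectionOnto F (x i) : H)⟫_ℂ‖ ≤ 2 * (ε / 8) := by
    calc ‖⟪T' bb, x i - (Submodule.orthogonalProjectionOnto F (x i) : H)⟫_ℂ‖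
        ≤ ‖T' bb‖ * ‖x i - (Submodule.orthogonalProjectionOnto F (x i) : H)‖ := norm_inner_le_norm _ _
      _ ≤ 2 * (ε / 8) := by
          refine mul_le_mul ?_ (hxn i).le (norm_nonneg _) (by norm_num)
          calc ‖T' bb‖ ≤ ‖T'‖ * ‖bb‖ := T'.le_opNorm _
            _ ≤ 1 * 2 := mul_le_mul hT'1 hbb2 (norm_nonneg _) zero_le_one
            _ = 2 := one_mul _
  have t3 : ‖⟪((Submodule.orthogonalProjectionOnto F (T' bb)) : H), x i⟫_ℂ‖ ≤ ε / 8 * 2 := by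
    calc ‖⟪((Submodule.orthogonalProjectionOnto F (T' bb)) : H), x i⟫_ℂ‖
        ≤ ‖((Submodule.orthogonalProjectionOnto F (T' bb)) : H)‖ * ‖x i‖ := norm_inner_le_norm _ _
      _ ≤ ε / 8 * 2 * 1 := by
          refine mul_le_mul ?_ (hx i) (norm_nonneg _) (by positivity)
          calc ‖((Submodule.orthogonalProjectionOnto F (T' bb)) : H)‖
              = ‖(Submodule.orthogonalProjectionOnto F (T' bb) : F)‖ := rfl
            _ ≤ ε / 8 * ‖bb‖ := hPTb
            _ ≤ ε / 8 * 2 := mul_le_mul_of_nonneg_left hbb2 hε8.le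
      _ = ε / 8 * 2 := mul_one _
  have hfinal : ‖⟪T' ξ - T' η, x i⟫_ℂ‖ < ε := by
    rw [hdecomp]
    calc ‖⟪T' (y : H), x i⟫_ℂ + (⟪T' bb, x i - (Submodule.orthogonalProjectionOnto F (x i) : H)⟫_ℂ
          + ⟪((Submodule.orthogonalProjectionOnto F (T' bb)) : H), x i⟫_ℂ)‖
        ≤ ‖⟪T' (y : H), x i⟫_ℂ‖ + (‖⟪T' bb, x i - (Submodule.orthogonalProjectionOnto F (x i) : H)⟫_ℂ‖
          + ‖⟪((Submodule.orthogonalProjectionOnto F (T' bb)) : H), x i⟫_ℂ‖) :=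
          (norm_add_le _ _).trans (by gcongr; exact norm_add_le _ _)
      _ ≤ ε / 8 + (2 * (ε / 8) + ε / 8 * 2) := add_le_add t1 (add_le_add t2 t3)
      _ < ε := by linarith
  exact hfinal
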